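/- Markov chain lemma for the two-way channel converse: for any (n, M1, M2) code for the additive-noise two-way channel in which the noise vector Z2^n is independent of (W1, W2, Z1^n), for every 1 ≤ i ≤ n the random variable Z_{2,i} is conditionally independent of (W1, W2, X1^i, X2^i) given Z2^{i−1}; consequently H(Z_{2,i} | Z2^{i−1}, W1, W2, X1^i, X2^i) = H(Z_{2,i} | Z2^{i−1}). -/

import Mathlib

open MeasureTheory ProbabilityTheory Real Filter Topology
open scoped ENNReal

noncomputable section

/-- Shannon entropy (in the same base as `Real.log`) of a finitely-valued random variable. -/
def Hent {Ω S : Type*} [MeasurableSpace Ω] [Fintype S] (μ : Measure Ω) (X : Ω → S) : ℝ :=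
  ∑ s : S, Real.negMulLog ((μ (X ⁻¹' {s})).toReal)

/-- Conditional Shannon entropy H(X | Y) = H(X, Y) − H(Y). -/
def Hcond {Ω S T : Type*} [MeasurableSpace Ω] [Fintype S] [Fintype T]
    (μ : Measure Ω) (X : Ω → S) (Y : Ω → T) : ℝ :=
  Hent μ (fun ω => (X ω, Y ω)) - Hent μ Y

/-- An (n, M1, M2) code for the two-way channel. -/
structure TWCode (q n M1 M2 : ℕ) where
  f1 : Fin M1 → (i : Fin n) → (Fin i.1 → ZMod q) → ZMod q
  f2 : Fin M2 → (i : Fin n) → (Fin i.1 → ZMod q) → ZMod q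
  g1 : Fin M1 → (Fin n → ZMod q) → Fin M2
  g2 : Fin M2 → (Fin n → ZMod q) → Fin M1

/-- The pair of channel inputs (X_{1,i}, X_{2,i}) produced by the adaptive encoders,
where Y_{1,j} = X_{1,j} + X_{2,j} + Z_{1,j} and Y_{2,j} = X_{1,j} + X_{2,j} + Z_{2,j}
(addition mod q). -/
def TWX {q n M1 M2 : ℕ} (C : TWCode q n M1 M2) (w1 : Fin M1) (w2 : Fin M2)
    (z1 z2 : Fin n → ZMod q) : (i : Fin n) → ZMod q × ZMod q
  | i =>
    (C.f1 w1 i (fun j =>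
        have h : j.1 < n := j.2.trans i.2
        (TWX C w1 w2 z1 z2 ⟨j.1, h⟩).1 + (TWX C w1 w2 z1 z2 ⟨j.1, h⟩).2 + z1 ⟨j.1, h⟩),
     C.f2 w2 i (fun j =>
        have h : j.1 < n := j.2.trans i.2
        (TWX C w1 w2 z1 z2 ⟨j.1, h⟩).1 + (TWX C w1 w2 z1 z2 ⟨j.1, h⟩).2 + z2 ⟨j.1, h⟩))
  termination_by i => i.1
  decreasing_by all_goals exact j.2

/-- Output sequence Y_1^n at user 1. -/
def TWY1 {q n M1 M2 : ℕ} (C : TWCode q n M1 M2) (w1 : Fin M1) (w2 : Fin M2)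
    (z1 z2 : Fin n → ZMod q) (i : Fin n) : ZMod q :=
  (TWX C w1 w2 z1 z2 i).1 + (TWX C w1 w2 z1 z2 i).2 + z1 i

/-- Output sequence Y_2^n at user 2. -/
def TWY2 {q n M1 M2 : ℕ} (C : TWCode q n M1 M2) (w1 : Fin M1) (w2 : Fin M2)
    (z1 z2 : Fin n → ZMod q) (i : Fin n) : ZMod q :=
  (TWX C w1 w2 z1 z2 i).1 + (TWX C w1 w2 z1 z2 i).2 + z2 i

/-- Elementary conditional independence of finitely-valued random variables X and Y given Z:
for all values a, b, c,  P(X=a, Y=b, Z=c) · P(Z=c) = P(X=a, Z=c) · P(Y=b, Z=c). -/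
def CondIndepElem {Ω S T U : Type*} [MeasurableSpace Ω] (μ : Measure Ω)
    (X : Ω → S) (Y : Ω → T) (Z : Ω → U) : Prop :=
  ∀ (a : S) (b : T) (c : U),
    μ (X ⁻¹' {a} ∩ Y ⁻¹' {b} ∩ Z ⁻¹' {c}) * μ (Z ⁻¹' {c}) =
      μ (X ⁻¹' {a} ∩ Z ⁻¹' {c}) * μ (Y ⁻¹' {b} ∩ Z ⁻¹' {c})

lemma sum_negMulLog_prod {S T : Type*} [Fintype S] [Fintype T]
    (u : S → ℝ) (v : T → ℝ) (p : ℝ) (f : S → T → ℝ)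
    (hu0 : ∀ a, 0 ≤ u a) (hv0 : ∀ b, 0 ≤ v b)
    (hf0 : ∀ a b, 0 ≤ f a b) (hfp : ∀ a b, f a b ≤ p)
    (hu : ∑ a, u a = p) (hv : ∑ b, v b = p)
    (hf : ∀ a b, f a b * p = u a * v b) :
    ∑ a, ∑ b, negMulLog (f a b) =
      ∑ a, negMulLog (u a) + ∑ b, negMulLog (v b) - negMulLog p := by
  by_cases hp : p = 0
  · subst hp
    have hu' : ∀ a, u a = 0 := fun a =>
      (Finset.sum_eq_zero_iff_of_nonneg (fun a _ => hu0 a)).mp hu a (Finset.mem_univ a)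
    have hv' : ∀ b, v b = 0 := fun b =>
      (Finset.sum_eq_zero_iff_of_nonneg (fun b _ => hv0 b)).mp hv b (Finset.mem_univ b)
    have hf' : ∀ a b, f a b = 0 := fun a b => le_antisymm (hfp a b) (hf0 a b)
    simp [hu', hv', hf']
  · have hfab : ∀ a b, f a b = u a * (v b * p⁻¹) := by
      intro a b
      have h1 : f a b = (f a b * p) * p⁻¹ := by field_simp
      rw [h1, hf a b]; ring
    have key : ∀ a b, negMulLog (f a b) =
        v b * (p⁻¹ * negMulLog (u a)) + u a * (p⁻¹ * negMulLog (v b))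
          + u a * (v b * (p⁻¹ * Real.log p)) := by
      intro a b
      rw [hfab a b, negMulLog_mul, negMulLog_mul]
      have : negMulLog p⁻¹ = p⁻¹ * Real.log p := by
        simp [negMulLog, Real.log_inv]
      rw [this]
      ring
    have e1 : ∀ a, ∑ b, negMulLog (f a b)
        = negMulLog (u a) + u a * (p⁻¹ * ∑ b, negMulLog (v b)) + u a * Real.log p := by
      intro a
      simp_rw [key]
      rw [Finset.sum_add_distrib, Finset.sum_add_distrib, ← Finset.sum_mul,
        ← Finset.mul_sum, ← Finset.mul_sum]
      simp_rw [← Finset.mul_sum, ← Finset.sum_mul, hv]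
      field_simp
      try ring
    calc ∑ a, ∑ b, negMulLog (f a b)
        = ∑ a, (negMulLog (u a) + u a * (p⁻¹ * ∑ b, negMulLog (v b)) + u a * Real.log p) :=
          Finset.sum_congr rfl fun a _ => e1 a
      _ = ∑ a, negMulLog (u a) + ∑ b, negMulLog (v b) - negMulLog p := by
          rw [Finset.sum_add_distrib, Finset.sum_add_distrib, ← Finset.sum_mul, ← Finset.sum_mul]
          rw [hu]
          have hnl : negMulLog p = -(p * Real.log p) := by
            simp [negMulLog]
          rw [hnl]
          field_simp
          try ring

lemma sum_measure_inter {Ω S : Type*} [MeasurableSpace Ω] [Fintype S] [MeasurableSpace S] [MeasurableSingletonClass S]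
    (μ : Measure Ω) (X : Ω → S) (hX : Measurable X) (s : Set Ω) (hs : MeasurableSet s) :
    ∑ a : S, μ (X ⁻¹' {a} ∩ s) = μ s := by
  have h1 : (⋃ a ∈ (Finset.univ : Finset S), (X ⁻¹' {a} ∩ s)) = s := by
    ext ω; simp
  have h2 := measure_biUnion_finset (μ := μ) (s := (Finset.univ : Finset S))
    (f := fun a => X ⁻¹' {a} ∩ s)
    (fun a _ b _ hab => Set.disjoint_left.2 fun ω hwa hwb => hab (by
      have h3 := hwa.1; have h4 := hwb.1; simp_all))
    (fun a _ => (hX (measurableSet_singleton a)).inter hs)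
  rw [h1] at h2
  exact h2.symm

lemma sum_toReal_measure_inter {Ω S : Type*} [MeasurableSpace Ω] [Fintype S]
    [MeasurableSpace S] [MeasurableSingletonClass S]
    (μ : Measure Ω) [IsFiniteMeasure μ] (X : Ω → S) (hX : Measurable X)
    (s : Set Ω) (hs : MeasurableSet s) :
    ∑ a : S, (μ (X ⁻¹' {a} ∩ s)).toReal = (μ s).toReal := by
  rw [← ENNReal.toReal_sum (fun a _ => measure_ne_top μ _), sum_measure_inter μ X hX s hs]



lemma Hcond_pair_of_condIndepElem {Ω S T U : Type*} [MeasurableSpace Ω]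
    [Fintype S] [Fintype T] [Fintype U]
    [MeasurableSpace S] [MeasurableSpace T] [MeasurableSpace U]
    [MeasurableSingletonClass S] [MeasurableSingletonClass T] [MeasurableSingletonClass U]
    (μ : Measure Ω) [IsProbabilityMeasure μ]
    (X : Ω → S) (B : Ω → T) (Z : Ω → U)
    (hX : Measurable X) (hB : Measurable B) (hZ : Measurable Z)
    (h : CondIndepElem μ X B Z) :
    Hcond μ X (fun ω => (Z ω, B ω)) = Hcond μ X Z := by
  have hXZB : ∀ (a : S) (c : U) (b : T),
      (fun ω => (X ω, Z ω, B ω)) ⁻¹' {(a, c, b)} = X ⁻¹' {a} ∩ B ⁻¹' {b} ∩ Z ⁻¹' {c} := by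
    intro a c b; ext ω
    simp only [Set.mem_preimage, Set.mem_singleton_iff, Prod.mk.injEq, Set.mem_inter_iff]
    tauto
  have hZB : ∀ (c : U) (b : T),
      (fun ω => (Z ω, B ω)) ⁻¹' {(c, b)} = B ⁻¹' {b} ∩ Z ⁻¹' {c} := by
    intro c b; ext ω
    simp only [Set.mem_preimage, Set.mem_singleton_iff, Prod.mk.injEq, Set.mem_inter_iff]
    tauto
  have hXZ : ∀ (a : S) (c : U),
      (fun ω => (X ω, Z ω)) ⁻¹' {(a, c)} = X ⁻¹' {a} ∩ Z ⁻¹' {c} := by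
    intro a c; ext ω
    simp only [Set.mem_preimage, Set.mem_singleton_iff, Prod.mk.injEq, Set.mem_inter_iff]
  have e1 : Hent μ (fun ω => (X ω, Z ω, B ω))
      = ∑ a : S, ∑ c : U, ∑ b : T,
          negMulLog (μ (X ⁻¹' {a} ∩ B ⁻¹' {b} ∩ Z ⁻¹' {c})).toReal := by
    rw [Hent, Fintype.sum_prod_type]
    exact Finset.sum_congr rfl fun a _ => by
      rw [Fintype.sum_prod_type]
      exact Finset.sum_congr rfl fun c _ => Finset.sum_congr rfl fun b _ => by rw [hXZB]
  have e2 : Hent μ (fun ω => (Z ω, B ω))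
      = ∑ c : U, ∑ b : T, negMulLog (μ (B ⁻¹' {b} ∩ Z ⁻¹' {c})).toReal := by
    rw [Hent, Fintype.sum_prod_type]
    exact Finset.sum_congr rfl fun c _ => Finset.sum_congr rfl fun b _ => by rw [hZB]
  have e3 : Hent μ (fun ω => (X ω, Z ω))
      = ∑ a : S, ∑ c : U, negMulLog (μ (X ⁻¹' {a} ∩ Z ⁻¹' {c})).toReal := by
    rw [Hent, Fintype.sum_prod_type]
    exact Finset.sum_congr rfl fun a _ => Finset.sum_congr rfl fun c _ => by rw [hXZ]
  rw [Hcond, Hcond, e1, e2, e3, Hent]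
  rw [Finset.sum_comm (γ := S) (f := fun a c => ∑ b : T,
      negMulLog (μ (X ⁻¹' {a} ∩ B ⁻¹' {b} ∩ Z ⁻¹' {c})).toReal),
    Finset.sum_comm (γ := S) (f := fun a c => negMulLog (μ (X ⁻¹' {a} ∩ Z ⁻¹' {c})).toReal),
    ← Finset.sum_sub_distrib, ← Finset.sum_sub_distrib]
  refine Finset.sum_congr rfl fun c _ => ?_
  have key := sum_negMulLog_prod
    (fun a => (μ (X ⁻¹' {a} ∩ Z ⁻¹' {c})).toReal)
    (fun b => (μ (B ⁻¹' {b} ∩ Z ⁻¹' {c})).toReal)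
    ((μ (Z ⁻¹' {c})).toReal)
    (fun a b => (μ (X ⁻¹' {a} ∩ B ⁻¹' {b} ∩ Z ⁻¹' {c})).toReal)
    (fun a => ENNReal.toReal_nonneg) (fun b => ENNReal.toReal_nonneg)
    (fun a b => ENNReal.toReal_nonneg)
    (fun a b => ENNReal.toReal_mono (measure_ne_top μ _)
      (measure_mono (Set.inter_subset_right)))
    (sum_toReal_measure_inter μ X hX _ (hZ (measurableSet_singleton c)))
    (sum_toReal_measure_inter μ B hB _ (hZ (measurableSet_singleton c)))
    (fun a b => by
      rw [← ENNReal.toReal_mul, ← ENNReal.toReal_mul, h a b c])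
  rw [key]
  ring

lemma TWX_congr {q n M1 M2 : ℕ} (C : TWCode q n M1 M2) (w1 : Fin M1) (w2 : Fin M2)
    (z1 : Fin n → ZMod q) (z2 z2' : Fin n → ZMod q) :
    ∀ (k : ℕ) (hk : k < n), (∀ j : Fin n, j.1 < k → z2 j = z2' j) →
      TWX C w1 w2 z1 z2 ⟨k, hk⟩ = TWX C w1 w2 z1 z2' ⟨k, hk⟩ := by
  intro k
  induction k using Nat.strong_induction_on with
  | _ k ih =>
    intro hk hag
    rw [TWX, TWX]
    have hrec : ∀ (j : ℕ) (hj : j < n), j < k →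
        TWX C w1 w2 z1 z2 ⟨j, hj⟩ = TWX C w1 w2 z1 z2' ⟨j, hj⟩ :=
      fun j hj hjk => ih j hjk hj (fun l hl => hag l (hl.trans hjk))
    refine Prod.ext ?_ ?_
    · simp only []
      congr 1
      funext j
      rw [hrec j.1 (j.2.trans hk) j.2]
    · simp only []
      congr 1
      funext j
      rw [hrec j.1 (j.2.trans hk) j.2, hag ⟨j.1, j.2.trans hk⟩ j.2]

/-- **Markov chain lemma for the two-way channel converse**: for any (n, M1, M2) code for
the additive-noise two-way channel in which the noise vector Z2^n is independent of
(W1, W2, Z1^n), for every time i (1-based time i+1, so 1 ≤ i+1 ≤ n) the noise letter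
Z_{2,i} is conditionally independent of (W1, W2, X1^i, X2^i) given the past noise Z2^{i−1};
consequently H(Z_{2,i} | Z2^{i−1}, W1, W2, X1^i, X2^i) = H(Z_{2,i} | Z2^{i−1}). -/
theorem twc_markov_chain_lemma {Ω : Type*} [MeasurableSpace Ω] (μ : Measure Ω)
    [IsProbabilityMeasure μ] (q : ℕ) [NeZero q] (hq : 2 ≤ q)
    (n M1 M2 : ℕ) (C : TWCode q n M1 M2)
    (W1 : Ω → Fin M1) (W2 : Ω → Fin M2) (Z1 Z2 : Ω → Fin n → ZMod q)
    (hW1 : Measurable W1) (hW2 : Measurable W2)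
    (hZ1 : Measurable Z1) (hZ2 : Measurable Z2)
    (hindep : IndepFun (fun ω => (W1 ω, W2 ω, Z1 ω)) Z2 μ) :
    ∀ i : Fin n,
      CondIndepElem μ
        -- X = Z_{2,i}
        (fun ω => Z2 ω i)
        -- Y = (W1, W2, X1^i, X2^i)
        (fun ω => (W1 ω, W2 ω,
          (fun j : Fin (i.1 + 1) =>
            (TWX C (W1 ω) (W2 ω) (Z1 ω) (Z2 ω)
              ⟨j.1, Nat.lt_of_le_of_lt (Nat.lt_succ_iff.mp j.2) i.2⟩).1),
          (fun j : Fin (i.1 + 1) =>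
            (TWX C (W1 ω) (W2 ω) (Z1 ω) (Z2 ω)
              ⟨j.1, Nat.lt_of_le_of_lt (Nat.lt_succ_iff.mp j.2) i.2⟩).2)))
        -- Z = Z2^{i-1}
        (fun ω => (fun j : Fin i.1 => Z2 ω ⟨j.1, j.2.trans i.2⟩)) ∧
      Hcond μ (fun ω => Z2 ω i)
        (fun ω => ((fun j : Fin i.1 => Z2 ω ⟨j.1, j.2.trans i.2⟩), W1 ω, W2 ω,
          (fun j : Fin (i.1 + 1) =>
            (TWX C (W1 ω) (W2 ω) (Z1 ω) (Z2 ω)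
              ⟨j.1, Nat.lt_of_le_of_lt (Nat.lt_succ_iff.mp j.2) i.2⟩).1),
          (fun j : Fin (i.1 + 1) =>
            (TWX C (W1 ω) (W2 ω) (Z1 ω) (Z2 ω)
              ⟨j.1, Nat.lt_of_le_of_lt (Nat.lt_succ_iff.mp j.2) i.2⟩).2))) =
      Hcond μ (fun ω => Z2 ω i)
        (fun ω => (fun j : Fin i.1 => Z2 ω ⟨j.1, j.2.trans i.2⟩)) := by
  intro i
  classical
  set Xf : Ω → ZMod q := fun ω => Z2 ω i with hXf
  set Bf : Ω → Fin M1 × Fin M2 × (Fin (i.1 + 1) → ZMod q) × (Fin (i.1 + 1) → ZMod q) :=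
    fun ω => (W1 ω, W2 ω,
      (fun j : Fin (i.1 + 1) =>
        (TWX C (W1 ω) (W2 ω) (Z1 ω) (Z2 ω)
          ⟨j.1, Nat.lt_of_le_of_lt (Nat.lt_succ_iff.mp j.2) i.2⟩).1),
      (fun j : Fin (i.1 + 1) =>
        (TWX C (W1 ω) (W2 ω) (Z1 ω) (Z2 ω)
          ⟨j.1, Nat.lt_of_le_of_lt (Nat.lt_succ_iff.mp j.2) i.2⟩).2)) with hBf
  set Zf : Ω → (Fin i.1 → ZMod q) :=
    fun ω => (fun j : Fin i.1 => Z2 ω ⟨j.1, j.2.trans i.2⟩) with hZf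
  set V : Ω → Fin M1 × Fin M2 × (Fin n → ZMod q) := fun ω => (W1 ω, W2 ω, Z1 ω) with hV
  have hCI : CondIndepElem μ Xf Bf Zf := by
    intro a b c
    set ec : Fin n → ZMod q := fun k => if h : k.1 < i.1 then c ⟨k.1, h⟩ else 0 with hec
    set ψ : Fin M1 × Fin M2 × (Fin n → ZMod q) →
        Fin M1 × Fin M2 × (Fin (i.1 + 1) → ZMod q) × (Fin (i.1 + 1) → ZMod q) :=
      fun v => (v.1, v.2.1,
        (fun j : Fin (i.1 + 1) =>
          (TWX C v.1 v.2.1 v.2.2 ec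
            ⟨j.1, Nat.lt_of_le_of_lt (Nat.lt_succ_iff.mp j.2) i.2⟩).1),
        (fun j : Fin (i.1 + 1) =>
          (TWX C v.1 v.2.1 v.2.2 ec
            ⟨j.1, Nat.lt_of_le_of_lt (Nat.lt_succ_iff.mp j.2) i.2⟩).2)) with hψ
    have hTW : ∀ ω, Zf ω = c → ∀ (k : ℕ) (hk : k < n), k ≤ i.1 →
        TWX C (W1 ω) (W2 ω) (Z1 ω) (Z2 ω) ⟨k, hk⟩
          = TWX C (W1 ω) (W2 ω) (Z1 ω) ec ⟨k, hk⟩ := by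
      intro ω hc k hk hki
      apply TWX_congr
      intro l hl
      have hli : l.1 < i.1 := lt_of_lt_of_le hl hki
      have h1 := congrFun hc ⟨l.1, hli⟩
      simp only [hZf] at h1
      rw [hec]
      simp only []
      rw [dif_pos hli, ← h1]
    have hBψ : ∀ ω, Zf ω = c → Bf ω = ψ (V ω) := by
      intro ω hc
      rw [hBf, hψ, hV]
      simp only []
      refine Prod.ext rfl (Prod.ext rfl (Prod.ext ?_ ?_)) <;>
        · funext j
          dsimp only
          rw [hTW ω hc j.1 (Nat.lt_of_le_of_lt (Nat.lt_succ_iff.mp j.2) i.2)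
            (Nat.lt_succ_iff.mp j.2)]
    set T1 : Set (Fin n → ZMod q) :=
      {z | z i = a ∧ (fun j : Fin i.1 => z ⟨j.1, j.2.trans i.2⟩) = c} with hT1
    set T2 : Set (Fin n → ZMod q) :=
      {z | (fun j : Fin i.1 => z ⟨j.1, j.2.trans i.2⟩) = c} with hT2
    have hE1 : Xf ⁻¹' {a} ∩ Bf ⁻¹' {b} ∩ Zf ⁻¹' {c} = V ⁻¹' (ψ ⁻¹' {b}) ∩ Z2 ⁻¹' T1 := by
      ext ω
      simp only [Set.mem_inter_iff, Set.mem_preimage, Set.mem_singleton_iff, hT1,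
        Set.mem_setOf_eq]
      constructor
      · rintro ⟨⟨hXa, hBb⟩, hZc⟩
        exact ⟨by rw [← hBψ ω hZc]; exact hBb, hXa, hZc⟩
      · rintro ⟨hψb, hXa, hZc⟩
        exact ⟨⟨hXa, by rw [hBψ ω hZc]; exact hψb⟩, hZc⟩
    have hE2 : Bf ⁻¹' {b} ∩ Zf ⁻¹' {c} = V ⁻¹' (ψ ⁻¹' {b}) ∩ Z2 ⁻¹' T2 := by
      ext ω
      simp only [Set.mem_inter_iff, Set.mem_preimage, Set.mem_singleton_iff, hT2,
        Set.mem_setOf_eq]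
      constructor
      · rintro ⟨hBb, hZc⟩
        exact ⟨by rw [← hBψ ω hZc]; exact hBb, hZc⟩
      · rintro ⟨hψb, hZc⟩
        exact ⟨by rw [hBψ ω hZc]; exact hψb, hZc⟩
    have hE3 : Zf ⁻¹' {c} = Z2 ⁻¹' T2 := by
      ext ω
      simp only [Set.mem_preimage, Set.mem_singleton_iff, hT2, Set.mem_setOf_eq]
      exact Iff.rfl
    have hE4 : Xf ⁻¹' {a} ∩ Zf ⁻¹' {c} = Z2 ⁻¹' T1 := by
      ext ω
      simp only [Set.mem_inter_iff, Set.mem_preimage, Set.mem_singleton_iff, hT1,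
        Set.mem_setOf_eq]
      exact Iff.rfl
    rw [hE1, hE2, hE4, hE3,
      hindep.measure_inter_preimage_eq_mul _ _ MeasurableSet.of_discrete
        MeasurableSet.of_discrete,
      hindep.measure_inter_preimage_eq_mul _ _ MeasurableSet.of_discrete
        MeasurableSet.of_discrete]
    ring
  refine ⟨hCI, ?_⟩
  have hXm : Measurable Xf := (measurable_pi_apply i).comp hZ2
  have hZm : Measurable Zf :=
    measurable_pi_lambda _ fun j => (measurable_pi_apply _).comp hZ2
  have hBm : Measurable Bf :=
    (Measurable.of_discrete
      (f := fun v : Fin M1 × Fin M2 × (Fin n → ZMod q) × (Fin n → ZMod q) =>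
        (v.1, v.2.1,
          (fun j : Fin (i.1 + 1) =>
            (TWX C v.1 v.2.1 v.2.2.1 v.2.2.2
              ⟨j.1, Nat.lt_of_le_of_lt (Nat.lt_succ_iff.mp j.2) i.2⟩).1),
          (fun j : Fin (i.1 + 1) =>
            (TWX C v.1 v.2.1 v.2.2.1 v.2.2.2
              ⟨j.1, Nat.lt_of_le_of_lt (Nat.lt_succ_iff.mp j.2) i.2⟩).2)))).comp
      (hW1.prodMk (hW2.prodMk (hZ1.prodMk hZ2)))
  exact Hcond_pair_of_condIndepElem μ Xf Bf Zf hXm hBm hZm hCI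

end
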